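/- arXiv:1606.00502 — 11 statements merged into one kernel-verified Lean document; each statement's English description precedes it below -/
import Mathlib

section
/- Let S be a set, let R be a relation on S (the specification), and let P be a deterministic relation on S (the function of a program). Then P is correct with respect to R (i.e., P refines R) if and only if dom(R ∩ P) = dom(R). -/
/-- The domain of a relation on `S`. -/
def dom {S : Type*} (R : Set (S × S)) : Set S := {s | ∃ s', (s, s') ∈ R}

/-- `refines R' R`: the relation `R'` refines the relation `R`. -/
def refines {S : Type*} (R' R : Set (S × S)) : Prop :=
  (dom R ×ˢ (Set.univ : Set S)) ∩ (dom R' ×ˢ (Set.univ : Set S)) ∩ (R ∪ R') = R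

/-- A relation is deterministic (a function). -/
def deterministic {S : Type*} (P : Set (S × S)) : Prop :=
  ∀ s s' s'', (s, s') ∈ P → (s, s'') ∈ P → s' = s''

/-- A deterministic program `P` is correct with respect to specification `R`
(i.e., `P` refines `R`) if and only if `dom (R ∩ P) = dom R`. -/
theorem stmt_0 {S : Type*} (R P : Set (S × S)) (hP : deterministic P) :
    refines P R ↔ dom (R ∩ P) = dom R := by
  constructor
  · intro h
    apply Set.Subset.antisymm
    · rintro s ⟨t, ht, _⟩; exact ⟨t, ht⟩
    · rintro s ⟨t, ht⟩
      have hsP : s ∈ dom P := by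
        have := h ▸ ht
        exact this.1.2.1
      obtain ⟨u, hu⟩ := hsP
      have : (s, u) ∈ R := by
        rw [← h]
        exact ⟨⟨⟨⟨t, ht⟩, trivial⟩, ⟨u, hu⟩, trivial⟩, Or.inr hu⟩
      exact ⟨u, this, hu⟩
  · intro h
    apply Set.Subset.antisymm
    · rintro ⟨s, t⟩ ⟨⟨⟨hsR, -⟩, hsP, -⟩, hst⟩
      rcases hst with hst | hst
      · exact hst
      · obtain ⟨u, huR, huP⟩ := (h ▸ hsR : s ∈ dom (R ∩ P))
        rwa [hP s t u hst huP]
    · rintro ⟨s, t⟩ hst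
      have hsR : s ∈ dom R := ⟨t, hst⟩
      obtain ⟨u, -, huP⟩ := (h ▸ hsR : s ∈ dom (R ∩ P))
      exact ⟨⟨⟨hsR, trivial⟩, ⟨u, huP⟩, trivial⟩, Or.inl hst⟩
end

section
/- The refinement relation is antisymmetric: for relations R and R' on a set S, if R' refines R and R refines R', then R = R'. -/
/-- The refinement relation is antisymmetric. -/
theorem stmt_2 {S : Type*} (R R' : Set (S × S))
    (h1 : refines R' R) (h2 : refines R R') : R = R' := by
  unfold refines at h1 h2
  ext ⟨s, t⟩
  constructor
  · intro hst
    have hd' : s ∈ dom R' := by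
      have := h1 ▸ hst
      exact this.1.2.1
    rw [← h2]
    exact ⟨⟨⟨hd', trivial⟩, ⟨⟨t, hst⟩, trivial⟩⟩, Or.inr hst⟩
  · intro hst
    have hd : s ∈ dom R := by
      have := h2 ▸ hst
      exact this.1.2.1
    rw [← h1]
    exact ⟨⟨⟨hd, trivial⟩, ⟨⟨t, hst⟩, trivial⟩⟩, Or.inr hst⟩
end

section
/- Let R be a specification on a set S and let P be a relation on S that is correct with respect to R (i.e., P refines R). Then P is more-correct with respect to R than every relation Q on S, i.e., dom(R ∩ Q) ⊆ dom(R ∩ P) for every relation Q on S. -/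
/-- A program that is correct with respect to `R` is more-correct with respect to
`R` than every relation `Q`. -/
theorem stmt_6 {S : Type*} (R P : Set (S × S)) (hP : refines P R) :
    ∀ Q : Set (S × S), dom (R ∩ Q) ⊆ dom (R ∩ P) := by
  intro Q s hs
  obtain ⟨s', hR, _⟩ := hs
  have hmem : (s, s') ∈ (dom R ×ˢ (Set.univ : Set S)) ∩ (dom P ×ˢ (Set.univ : Set S)) ∩ (R ∪ P) := by
    rw [hP]; exact hR
  obtain ⟨⟨_, hdomP, _⟩, _⟩ := hmem
  obtain ⟨t, ht⟩ := hdomP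
  have htR : (s, t) ∈ R := by
    rw [← hP]
    exact ⟨⟨⟨⟨s', hR⟩, trivial⟩, ⟨t, ht⟩, trivial⟩, Or.inr ht⟩
  exact ⟨t, htR, ht⟩
end

section
/- Let R be a specification on a set S, let P be a relation on S that is correct with respect to R, and let P' be a deterministic relation on S that is more-correct than P with respect to R. Then P' is correct with respect to R. -/
/-- A deterministic program that is more-correct than a correct program is itself
correct. -/
theorem stmt_7 {S : Type*} (R P P' : Set (S × S))
    (hcorrect : refines P R) (hdet : deterministic P')
    (hmc : dom (R ∩ P) ⊆ dom (R ∩ P')) : refines P' R := by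
  -- first: dom R ⊆ dom (R ∩ P')
  have hdomR : dom R ⊆ dom (R ∩ P') := by
    intro s hs
    apply hmc
    obtain ⟨t, ht⟩ := hs
    -- s ∈ dom P from hcorrect
    have hR : (s, t) ∈ ((dom R ×ˢ (Set.univ : Set S)) ∩ (dom P ×ˢ (Set.univ : Set S)) ∩ (R ∪ P)) := by
      rw [hcorrect]; exact ht
    obtain ⟨⟨_, hsP, _⟩, _⟩ := hR
    obtain ⟨u, hu⟩ := hsP
    have huR : (s, u) ∈ R := by
      rw [← hcorrect]
      exact ⟨⟨⟨⟨t, ht⟩, trivial⟩, ⟨⟨u, hu⟩, trivial⟩⟩, Or.inr hu⟩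
    exact ⟨u, huR, hu⟩
  unfold refines
  ext ⟨s, t⟩
  constructor
  · rintro ⟨⟨⟨hsR, -⟩, -⟩, (h | h)⟩
    · exact h
    · obtain ⟨u, huR, huP'⟩ := hdomR hsR
      have := hdet s u t huP' h
      subst this; exact huR
  · intro h
    obtain ⟨u, huR, huP'⟩ := hdomR ⟨t, h⟩
    exact ⟨⟨⟨⟨t, h⟩, trivial⟩, ⟨u, huP'⟩, trivial⟩, Or.inl h⟩
end

section
/- Let R be a specification on a set S and let P be a deterministic relation on S. Then P is correct with respect to R if and only if P is a greatest element of the relative-correctness ordering induced by R, i.e., if and only if dom(R ∩ Q) ⊆ dom(R ∩ P) for every relation Q on S. -/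
/-- A deterministic program is correct with respect to `R` iff it is a greatest
element of the relative-correctness ordering induced by `R`. -/
theorem stmt_8 {S : Type*} (R P : Set (S × S)) (hP : deterministic P) :
    refines P R ↔ ∀ Q : Set (S × S), dom (R ∩ Q) ⊆ dom (R ∩ P) := by
  constructor
  · intro h Q s hs
    obtain ⟨s', hs', _⟩ := hs
    have hsR : s ∈ dom R := ⟨s', hs'⟩
    have hsP : s ∈ dom P := by
      rw [← h] at hs'
      exact hs'.1.2.1
    obtain ⟨t, ht⟩ := hsP
    have : (s, t) ∈ R := by
      rw [← h]
      exact ⟨⟨⟨hsR, trivial⟩, ⟨t, ht⟩, trivial⟩, Or.inr ht⟩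
    exact ⟨t, this, ht⟩
  · intro h
    ext ⟨s, t⟩
    constructor
    · rintro ⟨⟨⟨⟨r, hr⟩, -⟩, hsP, -⟩, hst⟩
      rcases hst with hst | hst
      · exact hst
      · obtain ⟨u, huR, huP⟩ := h R ⟨r, hr, hr⟩
        have := hP s t u hst huP
        rwa [this]
    · intro hst
      have hsR : s ∈ dom R := ⟨t, hst⟩
      obtain ⟨u, -, huP⟩ := h R ⟨t, hst, hst⟩
      exact ⟨⟨⟨hsR, trivial⟩, ⟨u, huP⟩, trivial⟩, Or.inl hst⟩
end

section
/- Let R be a specification on a set S and let f : S → S be a (total, deterministic) program with graph P = {(s, f(s)) | s ∈ S}. Then f passes the absolute-correctness oracle on every input, i.e., Ω(s, f(s)) holds for all s ∈ S where Ω(s,s') ≡ (s ∈ dom(R) ⇒ (s,s') ∈ R), if and only if P is correct with respect to R (P refines R). -/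
/-- A total deterministic program `f` passes the absolute-correctness oracle
`Ω(s,s') ≡ (s ∈ dom R ⇒ (s,s') ∈ R)` on every input iff its graph `P` is
correct with respect to `R`. -/
theorem stmt_9 {S : Type*} (R : Set (S × S)) (f : S → S)
    (P : Set (S × S)) (hP : P = {p : S × S | p.2 = f p.1}) :
    (∀ s : S, s ∈ dom R → (s, f s) ∈ R) ↔ refines P R := by
  subst hP
  constructor
  · intro h
    apply Set.Subset.antisymm
    · rintro ⟨s, s'⟩ ⟨⟨⟨hs, -⟩, -⟩, hmem⟩
      rcases hmem with hR | hP
      · exact hR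
      · simp only [Set.mem_setOf_eq] at hP
        rw [hP]
        exact h s hs
    · intro p hp
      exact ⟨⟨⟨⟨p.2, hp⟩, trivial⟩, ⟨⟨f p.1, rfl⟩, trivial⟩⟩, Or.inl hp⟩
  · intro h s hs
    have : (s, f s) ∈ (dom R ×ˢ (Set.univ : Set S)) ∩
        (dom {p : S × S | p.2 = f p.1} ×ˢ (Set.univ : Set S)) ∩
        (R ∪ {p : S × S | p.2 = f p.1}) :=
      ⟨⟨⟨hs, trivial⟩, ⟨⟨f s, rfl⟩, trivial⟩⟩, Or.inr rfl⟩
    rw [h] at this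
    exact this
end

section
/- Let R be a specification on a set S and let f, f' : S → S be (total, deterministic) programs with graphs P and P'. Then f' passes the relative-correctness oracle over f on every input, i.e., Ω'(s, f'(s)) ≡ (Ω(s, f(s)) ⇒ Ω(s, f'(s))) holds for all s ∈ S where Ω(s,s') ≡ (s ∈ dom(R) ⇒ (s,s') ∈ R), if and only if P' is more-correct than P with respect to R, i.e., dom(R ∩ P) ⊆ dom(R ∩ P'). -/
/-- A total deterministic program `f'` passes the relative-correctness oracle over
`f` on every input iff its graph `P'` is more-correct than the graph `P` of `f`
with respect to `R`. -/
theorem stmt_10 {S : Type*} (R : Set (S × S)) (f f' : S → S)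
    (P P' : Set (S × S))
    (hP : P = {p : S × S | p.2 = f p.1}) (hP' : P' = {p : S × S | p.2 = f' p.1}) :
    (∀ s : S, (s ∈ dom R → (s, f s) ∈ R) → (s ∈ dom R → (s, f' s) ∈ R)) ↔
      dom (R ∩ P) ⊆ dom (R ∩ P') := by
  subst hP hP'
  constructor
  · rintro h s ⟨s', ⟨hR, hf⟩⟩
    simp only [Set.mem_setOf_eq] at hf
    subst hf
    exact ⟨f' s, h s (fun _ => hR) ⟨_, hR⟩, rfl⟩
  · intro h s hΩ hs
    have : s ∈ dom (R ∩ {p : S × S | p.2 = f p.1}) :=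
      ⟨f s, hΩ hs, rfl⟩
    obtain ⟨t, ht, htf⟩ := h this
    simp only [Set.mem_setOf_eq] at htf
    subst htf
    exact ht
end

section
/- (Perfect recall of relative-correctness testing.) Let R be a specification on a set S, let P and P' be relations on S with P' deterministic, and suppose P' is more-correct than P with respect to R. Then P' runs successfully on every element of the competence domain of P: for every s ∈ dom(R ∩ P) and every s' with (s,s') ∈ P', we have (s,s') ∈ R. -/
/-- Perfect recall of relative-correctness testing: if the deterministic relation
`P'` is more-correct than `P` with respect to `R`, then `P'` runs successfully
on every element of the competence domain of `P`. -/
theorem stmt_11 {S : Type*} (R P P' : Set (S × S))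
    (hdet : deterministic P') (hmc : dom (R ∩ P) ⊆ dom (R ∩ P')) :
    ∀ s ∈ dom (R ∩ P), ∀ s', (s, s') ∈ P' → (s, s') ∈ R := by
  intro s hs s' hs'
  obtain ⟨t, htR, htP'⟩ := hmc hs
  rwa [hdet s s' t hs' htP']
end

section
/- (Poor precision of absolute-correctness-based repair.) There exist a set S, a specification R on S, deterministic relations P and P' on S, and a nonempty test set T ⊆ dom(R), such that P' passes the absolute-correctness test on T (i.e., T ⊆ dom(R ∩ P')) and yet P' is not more-correct than P with respect to R (i.e., dom(R ∩ P) ⊄ dom(R ∩ P')). -/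
/-- Poor precision of absolute-correctness-based repair: a mutant may pass the
absolute-correctness test on a nonempty test set `T ⊆ dom R` and yet not be
more-correct than the original program. -/
theorem stmt_12 :
    ∃ (S : Type) (R P P' : Set (S × S)) (T : Set S),
      deterministic P ∧ deterministic P' ∧
      T.Nonempty ∧ T ⊆ dom R ∧
      T ⊆ dom (R ∩ P') ∧
      ¬ dom (R ∩ P) ⊆ dom (R ∩ P') := by
  refine ⟨Bool, Set.univ, {p | p.2 = p.1}, {(true, true)}, {true}, ?_, ?_, ⟨true, rfl⟩, ?_, ?_, ?_⟩
  · intro s s' s'' h h'; simp only [Set.mem_setOf_eq] at h h'; rw [h, h']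
  · intro s s' s'' h h'
    simp only [Set.mem_singleton_iff, Prod.ext_iff] at h h'
    rw [h.2, h'.2]
  · intro x hx; exact ⟨x, trivial⟩
  · intro x hx
    simp only [Set.mem_singleton_iff] at hx
    exact ⟨true, trivial, by simp [hx]⟩
  · intro h
    obtain ⟨y, -, hy⟩ := h (a := false) ⟨false, trivial, rfl⟩
    simp at hy
end

section
/- A program may be strictly more-correct than another without duplicating its behavior on its competence domain: there exist a set S, a specification R on S, and deterministic relations P and P' on S, such that dom(R ∩ P) is nonempty, dom(R ∩ P) ⊊ dom(R ∩ P') (P' is strictly more-correct than P with respect to R), and P ∩ P' = ∅ (P' agrees with P on no input). -/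
/-- A program may be strictly more-correct than another without duplicating its
behavior on its competence domain. -/
theorem stmt_14 :
    ∃ (S : Type) (R P P' : Set (S × S)),
      deterministic P ∧ deterministic P' ∧
      (dom (R ∩ P)).Nonempty ∧
      dom (R ∩ P) ⊂ dom (R ∩ P') ∧
      P ∩ P' = ∅ := by
  refine ⟨Bool, Set.univ, {(false, false)}, {(false, true), (true, true)}, ?_, ?_, ?_, ?_, ?_⟩
  · intro s s' s'' h1 h2
    simp only [Set.mem_singleton_iff, Prod.mk.injEq] at h1 h2
    rw [h1.2, h2.2]
  · intro s s' s'' h1 h2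
    simp only [Set.mem_insert_iff, Set.mem_singleton_iff, Prod.mk.injEq] at h1 h2
    rcases h1 with ⟨_, rfl⟩ | ⟨_, rfl⟩ <;> rcases h2 with ⟨_, rfl⟩ | ⟨_, rfl⟩ <;> rfl
  · exact ⟨false, false, Set.mem_univ _, rfl⟩
  · constructor
    · intro s ⟨s', _, hs⟩
      simp only [Set.mem_singleton_iff, Prod.mk.injEq] at hs
      exact ⟨true, Set.mem_univ _, by simp [hs.1]⟩
    · intro h
      have : (true : Bool) ∈ dom (Set.univ ∩ ({(false, true), (true, true)} : Set (Bool × Bool))) := ⟨true, Set.mem_univ _, by simp⟩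
      have := h this
      obtain ⟨s', _, hs⟩ := this
      simp at hs
  · ext ⟨a, b⟩
    simp only [Set.mem_inter_iff, Set.mem_singleton_iff, Set.mem_insert_iff,
      Prod.mk.injEq, Set.mem_empty_iff_false, iff_false]
    rintro ⟨⟨rfl, rfl⟩, h⟩
    simp at h
end

section
/- Let N ≥ 1 be a natural number and let S be the state space whose states s consist of an integer array a(s) : {0,...,N} → ℤ together with integer variables x(s) and i(s). Let R = {(s,s') | x(s') = Σ_{k=1}^{N} a(s)[k]} and let P = {(s,s') | a(s') = a(s) ∧ i(s') = N ∧ x(s') = Σ_{k=0}^{N-1} a(s)[k]} (the function of the array-summation program p). Then the competence domain of P with respect to R is dom(R ∩ P) = {s | a(s)[0] = a(s)[N]}. -/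
/-- State space of the array-summation program: an array `a : {0,…,N} → ℤ` and
integer variables `x` and `i`. -/
structure St (N : ℕ) where
  a : Fin (N + 1) → ℤ
  x : ℤ
  i : ℤ


lemma ioi_erase' (N : ℕ) : (Finset.Ioi (0 : Fin (N+1))) = Finset.univ.erase 0 := by
  ext k; simp [Fin.pos_iff_ne_zero]

lemma iio_erase' (N : ℕ) : (Finset.Iio (Fin.last N)) = Finset.univ.erase (Fin.last N) := by
  ext k; simp [Finset.mem_Iio, Fin.lt_def, Fin.ext_iff, Fin.val_last]
  constructor
  · rintro ⟨a, ha⟩; have := a.isLt; omega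
  · intro h; exact ⟨⟨k.val, by have := k.isLt; omega⟩, rfl⟩

lemma sums_iff' (N : ℕ) (a : Fin (N+1) → ℤ) :
    (∑ k ∈ Finset.Ioi (0 : Fin (N+1)), a k = ∑ k ∈ Finset.Iio (Fin.last N), a k)
    ↔ a 0 = a (Fin.last N) := by
  rw [ioi_erase', iio_erase']
  have h1 := Finset.add_sum_erase Finset.univ a (Finset.mem_univ (0 : Fin (N+1)))
  have h2 := Finset.add_sum_erase Finset.univ a (Finset.mem_univ (Fin.last N))
  omega

/-- The competence domain of the array-summation program
`P = {(s,s') | a' = a ∧ i' = N ∧ x' = Σ_{k=0}^{N-1} a[k]}` with respect to the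
specification `R = {(s,s') | x' = Σ_{k=1}^{N} a[k]}` is `{s | a[0] = a[N]}`. -/
theorem stmt_15 (N : ℕ) (hN : 1 ≤ N)
    (R : Set (St N × St N))
    (hR : R = {p : St N × St N |
      p.2.x = ∑ k ∈ Finset.Ioi (0 : Fin (N + 1)), p.1.a k})
    (P : Set (St N × St N))
    (hP : P = {p : St N × St N |
      p.2.a = p.1.a ∧ p.2.i = (N : ℤ) ∧
      p.2.x = ∑ k ∈ Finset.Iio (Fin.last N), p.1.a k}) :
    dom (R ∩ P) = {s : St N | s.a 0 = s.a (Fin.last N)} := by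
  ext s
  subst hR hP
  simp only [dom, Set.mem_setOf_eq, Set.mem_inter_iff]
  constructor
  · rintro ⟨s', h1, ha, hi, h2⟩
    rw [← sums_iff' N s.a]
    rw [h1] at h2
    exact h2
  · intro h
    exact ⟨⟨s.a, ∑ k ∈ Finset.Ioi (0 : Fin (N+1)), s.a k, (N : ℤ)⟩,
      rfl, rfl, rfl, (sums_iff' N s.a).mpr h⟩
end
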